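/- Let a₁, a₂, a₃ ∈ ℝⁿ be not collinear and let x̄ ∉ {a₁, a₂, a₃}. Set vᵢ = (x̄ - aᵢ)/‖x̄ - aᵢ‖. Then x̄ minimizes φ(x) = ‖x-a₁‖+‖x-a₂‖+‖x-a₃‖ if and only if ⟨vᵢ, vⱼ⟩ = -1/2 for all i ≠ j. -/

import Mathlib

open RealInnerProductSpace

variable {E : Type*} [NormedAddCommGroup E] [InnerProductSpace ℝ E]

/-- Quadratic upper bound on the norm of a perturbation. -/
lemma aux_quad_bound (w s : E) (hw : w ≠ 0) (t : ℝ) (ht : 0 ≤ t)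
    (hts : t * ‖s‖ ≤ ‖w‖) :
    ‖w - t • s‖ ≤ ‖w‖ - t * (⟪w, s⟫ / ‖w‖) + t ^ 2 * ‖s‖ ^ 2 / (2 * ‖w‖) := by
  have hA : 0 < ‖w‖ := norm_pos_iff.mpr hw
  have hCS : |⟪w, s⟫| ≤ ‖w‖ * ‖s‖ := abs_real_inner_le_norm w s
  have hCS1 : -(‖w‖ * ‖s‖) ≤ ⟪w, s⟫ := neg_le_of_abs_le hCS
  have hRHS : 0 ≤ ‖w‖ - t * (⟪w, s⟫ / ‖w‖) + t ^ 2 * ‖s‖ ^ 2 / (2 * ‖w‖) := by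
    have h1 : t * (⟪w, s⟫ / ‖w‖) ≤ t * ‖s‖ := by
      apply mul_le_mul_of_nonneg_left _ ht
      rw [div_le_iff₀ hA]
      calc ⟪w, s⟫ ≤ |⟪w, s⟫| := le_abs_self _
        _ ≤ ‖w‖ * ‖s‖ := hCS
        _ = ‖s‖ * ‖w‖ := mul_comm _ _
    have h2 : 0 ≤ t ^ 2 * ‖s‖ ^ 2 / (2 * ‖w‖) := by positivity
    nlinarith
  have hsq : ‖w - t • s‖ ^ 2 = ‖w‖ ^ 2 - 2 * (t * ⟪w, s⟫) + t ^ 2 * ‖s‖ ^ 2 := by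
    rw [norm_sub_sq_real, real_inner_smul_right, norm_smul]
    simp [Real.norm_eq_abs, abs_of_nonneg ht, mul_pow]
  have hL : 0 ≤ ‖w - t • s‖ := norm_nonneg _
  have key : ‖w - t • s‖ ^ 2 ≤ (‖w‖ - t * (⟪w, s⟫ / ‖w‖) + t ^ 2 * ‖s‖ ^ 2 / (2 * ‖w‖)) ^ 2 := by
    have hA' : ‖w‖ ≠ 0 := ne_of_gt hA
    have expand : (‖w‖ - t * (⟪w, s⟫ / ‖w‖) + t ^ 2 * ‖s‖ ^ 2 / (2 * ‖w‖)) ^ 2 =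
        (‖w‖ ^ 2 - 2 * (t * ⟪w, s⟫) + t ^ 2 * ‖s‖ ^ 2)
          + (t * (⟪w, s⟫ / ‖w‖) - t ^ 2 * ‖s‖ ^ 2 / (2 * ‖w‖)) ^ 2 := by
      field_simp
      ring
    rw [hsq, expand]
    nlinarith [sq_nonneg (t * (⟪w, s⟫ / ‖w‖) - t ^ 2 * ‖s‖ ^ 2 / (2 * ‖w‖))]
  nlinarith [key, hL, hRHS]

lemma aux_unit_norm (w : E) (hw : w ≠ 0) : ‖‖w‖⁻¹ • w‖ = 1 := by
  have hA : 0 < ‖w‖ := norm_pos_iff.mpr hw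
  rw [norm_smul, norm_inv, norm_norm]
  field_simp

/-- Subgradient inequality for the norm. -/
lemma aux_subgrad (w : E) (hw : w ≠ 0) (u : E) :
    ‖w‖ + ⟪‖w‖⁻¹ • w, u - w⟫ ≤ ‖u‖ := by
  have hA : 0 < ‖w‖ := norm_pos_iff.mpr hw
  have h1 : ⟪‖w‖⁻¹ • w, u⟫ ≤ ‖u‖ := by
    calc ⟪‖w‖⁻¹ • w, u⟫ ≤ ‖‖w‖⁻¹ • w‖ * ‖u‖ := real_inner_le_norm _ _
      _ = ‖u‖ := by rw [aux_unit_norm w hw, one_mul]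
  have h2 : ⟪‖w‖⁻¹ • w, w⟫ = ‖w‖ := by
    rw [real_inner_smul_left, real_inner_self_eq_norm_sq]
    field_simp
  rw [inner_sub_right, h2]
  linarith

/-- Three unit vectors summing to zero have pairwise inner product -1/2. -/
lemma aux_unit_sum (p q r : E) (hp : ‖p‖ = 1) (hq : ‖q‖ = 1) (hr : ‖r‖ = 1)
    (h : p + q + r = 0) : ⟪p, q⟫ = -(1/2) := by
  have h1 : p + q = -r := by
    have := eq_neg_of_add_eq_zero_left h
    linear_combination (norm := abel) this
  have h2 : ‖p + q‖ ^ 2 = ‖p‖ ^ 2 + 2 * ⟪p, q⟫ + ‖q‖ ^ 2 := norm_add_sq_real p q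
  rw [h1, norm_neg, hr, hp, hq] at h2
  linarith

set_option maxHeartbeats 1000000 in
theorem stmt_10 (n : ℕ) (a : Fin 3 → EuclideanSpace ℝ (Fin n))
    (hcol : ¬ Collinear ℝ (Set.range a))
    (x₀ : EuclideanSpace ℝ (Fin n)) (hx₀ : ∀ i, x₀ ≠ a i) :
    (∀ x, ∑ i, ‖x₀ - a i‖ ≤ ∑ i, ‖x - a i‖) ↔
      ∀ i j, i ≠ j →
        (inner ℝ (‖x₀ - a i‖⁻¹ • (x₀ - a i)) (‖x₀ - a j‖⁻¹ • (x₀ - a j)) : ℝ) = -(1/2) := by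
  set v : Fin 3 → EuclideanSpace ℝ (Fin n) := fun i => ‖x₀ - a i‖⁻¹ • (x₀ - a i) with hv
  have hw : ∀ i, x₀ - a i ≠ 0 := fun i => sub_ne_zero.mpr (hx₀ i)
  have hA : ∀ i, (0:ℝ) < ‖x₀ - a i‖ := fun i => norm_pos_iff.mpr (hw i)
  have hv1 : ∀ i, ‖v i‖ = 1 := fun i => aux_unit_norm _ (hw i)
  -- key intermediate: sum of the unit vectors is zero
  have main : (∀ x, ∑ i, ‖x₀ - a i‖ ≤ ∑ i, ‖x - a i‖) ↔ (∑ i, v i) = 0 := by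
    constructor
    · intro hmin
      by_contra hs
      set s : EuclideanSpace ℝ (Fin n) := ∑ i, v i with hsdef
      have hs0 : 0 < ‖s‖ := norm_pos_iff.mpr hs
      set K : ℝ := ∑ i, ‖s‖ ^ 2 / (2 * ‖x₀ - a i‖) with hK
      have hK0 : 0 < K := by
        rw [hK]
        apply Finset.sum_pos _ Finset.univ_nonempty
        intro i _
        exact div_pos (pow_pos hs0 2) (by linarith [hA i])
      -- choose t
      set Amin : ℝ := min ‖x₀ - a 0‖ (min ‖x₀ - a 1‖ ‖x₀ - a 2‖) with hAmin
      have hAmin0 : 0 < Amin := lt_min (hA 0) (lt_min (hA 1) (hA 2))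
      set t : ℝ := min (‖s‖ ^ 2 / (2 * K)) (Amin / ‖s‖) with htdef
      have ht0 : 0 < t := lt_min (div_pos (by positivity) (by linarith)) (div_pos hAmin0 hs0)
      have htAi : ∀ i, t * ‖s‖ ≤ ‖x₀ - a i‖ := by
        intro i
        have h1 : t ≤ Amin / ‖s‖ := min_le_right _ _
        have h2 : t * ‖s‖ ≤ Amin := by
          rw [← le_div_iff₀ hs0]; exact h1
        have h3 : Amin ≤ ‖x₀ - a i‖ := by
          fin_cases i
          · exact min_le_left _ _
          · exact le_trans (min_le_right _ _) (min_le_left _ _)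
          · exact le_trans (min_le_right _ _) (min_le_right _ _)
        linarith
      have hbound : ∀ i, ‖(x₀ - t • s) - a i‖ ≤
          ‖x₀ - a i‖ - t * (⟪x₀ - a i, s⟫ / ‖x₀ - a i‖) + t ^ 2 * ‖s‖ ^ 2 / (2 * ‖x₀ - a i‖) := by
        intro i
        have : (x₀ - t • s) - a i = (x₀ - a i) - t • s := by abel
        rw [this]
        exact aux_quad_bound _ s (hw i) t ht0.le (htAi i)
      have hsum := hmin (x₀ - t • s)
      have hsum2 : ∑ i, ‖(x₀ - t • s) - a i‖ ≤
          ∑ i, ‖x₀ - a i‖ - t * ‖s‖ ^ 2 + t ^ 2 * K := by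
        have hinner : ∑ i, ⟪x₀ - a i, s⟫ / ‖x₀ - a i‖ = ‖s‖ ^ 2 := by
          have : ∀ i, ⟪x₀ - a i, s⟫ / ‖x₀ - a i‖ = ⟪v i, s⟫ := by
            intro i
            rw [hv, real_inner_smul_left]
            field_simp
          simp_rw [this]
          rw [← sum_inner, ← hsdef, real_inner_self_eq_norm_sq]
        calc ∑ i, ‖(x₀ - t • s) - a i‖
            ≤ ∑ i, (‖x₀ - a i‖ - t * (⟪x₀ - a i, s⟫ / ‖x₀ - a i‖)
                + t ^ 2 * ‖s‖ ^ 2 / (2 * ‖x₀ - a i‖)) :=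
              Finset.sum_le_sum (fun i _ => hbound i)
          _ = ∑ i, (‖x₀ - a i‖ - t * (⟪x₀ - a i, s⟫ / ‖x₀ - a i‖)
                + t ^ 2 * (‖s‖ ^ 2 / (2 * ‖x₀ - a i‖))) :=
              Finset.sum_congr rfl fun i _ => by ring
          _ = ∑ i, ‖x₀ - a i‖ - t * ‖s‖ ^ 2 + t ^ 2 * K := by
              rw [Finset.sum_add_distrib, Finset.sum_sub_distrib, ← Finset.mul_sum,
                ← Finset.mul_sum, hinner, hK]
      have htK : t * K ≤ ‖s‖ ^ 2 / 2 := by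
        have h1 : t ≤ ‖s‖ ^ 2 / (2 * K) := min_le_left _ _
        rw [le_div_iff₀ (mul_pos two_pos hK0)] at h1
        linarith [h1]
      nlinarith [hsum, hsum2, ht0, hs0, htK, mul_pos ht0 hK0]
    · intro hsum x
      have key : ∀ i, ‖x₀ - a i‖ + ⟪v i, (x - a i) - (x₀ - a i)⟫ ≤ ‖x - a i‖ :=
        fun i => aux_subgrad (x₀ - a i) (hw i) (x - a i)
      have h2 : ∑ i, (‖x₀ - a i‖ + ⟪v i, (x - a i) - (x₀ - a i)⟫) ≤ ∑ i, ‖x - a i‖ :=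
        Finset.sum_le_sum (fun i _ => key i)
      have h3 : ∀ i, (x - a i) - (x₀ - a i) = x - x₀ := fun i => by abel
      simp_rw [h3] at h2
      rw [Finset.sum_add_distrib, ← sum_inner, hsum] at h2
      simpa using h2
  rw [main]
  constructor
  · intro hsum i j hij
    rw [Fin.sum_univ_three] at hsum
    have e01 : ⟪v 0, v 1⟫ = -(1/2) :=
      aux_unit_sum _ _ _ (hv1 0) (hv1 1) (hv1 2) hsum
    have e02 : ⟪v 0, v 2⟫ = -(1/2) :=
      aux_unit_sum _ _ _ (hv1 0) (hv1 2) (hv1 1) (by rw [← hsum]; abel)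
    have e10 : ⟪v 1, v 0⟫ = -(1/2) :=
      aux_unit_sum _ _ _ (hv1 1) (hv1 0) (hv1 2) (by rw [← hsum]; abel)
    have e12 : ⟪v 1, v 2⟫ = -(1/2) :=
      aux_unit_sum _ _ _ (hv1 1) (hv1 2) (hv1 0) (by rw [← hsum]; abel)
    have e20 : ⟪v 2, v 0⟫ = -(1/2) :=
      aux_unit_sum _ _ _ (hv1 2) (hv1 0) (hv1 1) (by rw [← hsum]; abel)
    have e21 : ⟪v 2, v 1⟫ = -(1/2) :=
      aux_unit_sum _ _ _ (hv1 2) (hv1 1) (hv1 0) (by rw [← hsum]; abel)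
    fin_cases i <;> fin_cases j <;>
      first
        | exact absurd rfl hij
        | exact e01 | exact e02 | exact e10 | exact e12 | exact e20 | exact e21
  · intro h
    have h01 : ⟪v 0, v 1⟫ = -(1/2) := h 0 1 (by decide)
    have h02 : ⟪v 0, v 2⟫ = -(1/2) := h 0 2 (by decide)
    have h12 : ⟪v 1, v 2⟫ = -(1/2) := h 1 2 (by decide)
    have h10 : ⟪v 1, v 0⟫ = -(1/2) := h 1 0 (by decide)
    have h20 : ⟪v 2, v 0⟫ = -(1/2) := h 2 0 (by decide)
    have h21 : ⟪v 2, v 1⟫ = -(1/2) := h 2 1 (by decide)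
    have hnorm : ‖∑ i, v i‖ ^ 2 = 0 := by
      rw [← real_inner_self_eq_norm_sq, Fin.sum_univ_three]
      simp only [inner_add_left, inner_add_right]
      have e0 : ⟪v 0, v 0⟫ = 1 := by
        rw [real_inner_self_eq_norm_sq, hv1 0]; norm_num
      have e1 : ⟪v 1, v 1⟫ = 1 := by
        rw [real_inner_self_eq_norm_sq, hv1 1]; norm_num
      have e2 : ⟪v 2, v 2⟫ = 1 := by
        rw [real_inner_self_eq_norm_sq, hv1 2]; norm_num
      rw [e0, e1, e2, h01, h02, h12, h10, h20, h21]
      norm_num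
    have : ‖∑ i, v i‖ = 0 := by
      nlinarith [norm_nonneg (∑ i, v i)]
    exact norm_eq_zero.mp this
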